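/- For a finite field extension L/K, every K-subalgebra of End_K(L) containing (the image of) L is of the form End_M(L) for a unique intermediate field K ⊆ M ⊆ L, namely M = C_{End_K(L)}(B); moreover C_{End_K(L)}(M) = End_M(L) for every intermediate field M. -/

import Mathlib

section JB

variable (K L : Type) [Field K] [Field L] [Algebra K L] [FiniteDimensional K L]
variable (B : Subalgebra K (Module.End K L))

@[simp] lemma jb_lmul_apply (m x : L) : Algebra.lmul K L m x = m * x := rfl

/-- The subalgebra of `L` of elements whose left-multiplication centralizes `B`. -/
noncomputable def jbM : IntermediateField K L :=
  Subalgebra.IsAlgebraic.toIntermediateField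
    (S := (Subalgebra.centralizer K (B : Set (Module.End K L))).comap (Algebra.lmul K L))
    (fun x _ => Algebra.IsAlgebraic.isAlgebraic x)

lemma mem_jbM {m : L} :
    m ∈ jbM K L B ↔ ∀ f ∈ B, ∀ x : L, f (m * x) = m * f x := by
  show Algebra.lmul K L m ∈ Subalgebra.centralizer K (B : Set (Module.End K L)) ↔ _
  rw [Subalgebra.mem_centralizer_iff]
  constructor
  · intro h f hf x
    have := LinearMap.ext_iff.mp (h f hf) x
    simpa [Module.End.mul_apply] using this
  · intro h f hf
    ext x
    simpa [Module.End.mul_apply] using (h f hf x)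

end JB

section JB2

variable {K L : Type} [Field K] [Field L] [Algebra K L] [FiniteDimensional K L]
variable {B : Subalgebra K (Module.End K L)}

lemma jb_density (hB : (Algebra.lmul K L).range ≤ B) :
    ∀ (n : ℕ) (x : Fin n → L), LinearIndependent (jbM K L B) x →
      ∀ y : Fin n → L, ∃ b ∈ B, ∀ i, b (x i) = y i := by
  intro n
  induction n with
  | zero => exact fun x _ y => ⟨0, B.zero_mem, fun i => i.elim0⟩
  | succ n IH =>
    intro x hx y
    set M := jbM K L B with hM
    set x' : Fin n → L := x ∘ Fin.castSucc with hx'def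
    have hx' : LinearIndependent M x' := hx.comp _ (Fin.castSucc_injective n)
    set xl : L := x (Fin.last n) with hxl
    -- key claim : some element of B kills all x' j but not xl
    have key : ∃ a ∈ B, (∀ j : Fin n, a (x' j) = 0) ∧ a xl ≠ 0 := by
      by_contra hcon
      push_neg at hcon
      -- hcon : ∀ a ∈ B, (∀ j, a (x' j) = 0) → a xl = 0
      -- choose realizers b i with b i (x' j) = δ_{ij}
      have hreal : ∀ i : Fin n, ∃ b ∈ B, ∀ j, b (x' j) = if j = i then 1 else 0 :=
        fun i => IH x' hx' _
      choose bb hbbB hbb using hreal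
      set c : Fin n → L := fun i => bb i xl with hc
      -- uniqueness of value at xl for realizers of (i, z)
      have uniq : ∀ (i : Fin n) (z : L) (b : Module.End K L), b ∈ B →
          (∀ j, b (x' j) = if j = i then z else 0) → b xl = z * c i := by
        intro i z b hbB hb
        have hmem : b - Algebra.lmul K L z * bb i ∈ B :=
          B.sub_mem hbB (B.mul_mem (hB (AlgHom.mem_range_self _ z)) (hbbB i))
        have hkill : ∀ j, (b - Algebra.lmul K L z * bb i) (x' j) = 0 := by
          intro j
          rw [LinearMap.sub_apply, Module.End.mul_apply, hb j, hbb i j]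
          split <;> simp
        have := hcon _ hmem hkill
        simp only [LinearMap.sub_apply, Module.End.mul_apply, sub_eq_zero] at this
        simpa using this
      -- each c i lies in M
      have cM : ∀ i, c i ∈ M := by
        intro i
        rw [hM, mem_jbM]
        intro f hf w
        -- realizer for (i, w) : lmul w * bb i ; compose with f to realize (i, f w)
        have h1 : ∀ j, (f * (Algebra.lmul K L w * bb i)) (x' j)
            = if j = i then f w else 0 := by
          intro j
          simp [Module.End.mul_apply, hbb i j]
          split <;> simp
        have h2 := uniq i (f w) _ (B.mul_mem hf (B.mul_mem (hB (AlgHom.mem_range_self _ w)) (hbbB i))) h1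
        -- LHS = f (w * c i)
        have h3 : (f * (Algebra.lmul K L w * bb i)) xl = f (w * c i) := by
          simp [Module.End.mul_apply, hc]
        rw [h3] at h2
        rw [mul_comm (c i) w, mul_comm (c i) (f w)]
        exact h2
      -- xl is an M-combination of the x' i
      have hrel : xl = ∑ i, x' i * c i := by
        have hb' : (1 : Module.End K L) - ∑ i, Algebra.lmul K L (x' i) * bb i ∈ B := by
          refine B.sub_mem B.one_mem (Subalgebra.sum_mem B fun i _ =>
            B.mul_mem (hB (AlgHom.mem_range_self _ _)) (hbbB i))
        have hkill : ∀ j, ((1 : Module.End K L) - ∑ i, Algebra.lmul K L (x' i) * bb i) (x' j) = 0 := by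
          intro j
          simp only [LinearMap.sub_apply, Module.End.one_apply, LinearMap.sum_apply,
            Module.End.mul_apply, hbb, sub_eq_zero, jb_lmul_apply, mul_ite, mul_one, mul_zero]
          simp [Finset.sum_ite_eq, Finset.sum_ite_eq', eq_comm]
        have := hcon _ hb' hkill
        simp only [LinearMap.sub_apply, Module.End.one_apply, LinearMap.sum_apply,
          Module.End.mul_apply, sub_eq_zero] at this
        simpa [hc] using this
      -- contradicts linear independence
      set g : Fin (n+1) → M :=
        Fin.lastCases (motive := fun _ => M) (1 : M) (fun i => -(⟨c i, cM i⟩ : M)) with hg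
      have hli := Fintype.linearIndependent_iff.mp hx g
      have hsum : (∑ j : Fin (n+1), g j • x j) = 0 := by
        rw [Fin.sum_univ_castSucc]
        simp only [hg, Fin.lastCases_castSucc, Fin.lastCases_last, one_smul]
        have : ∀ i : Fin n, (-(⟨c i, cM i⟩ : M)) • x (Fin.castSucc i) = -(x' i * c i) := by
          intro i
          rw [neg_smul, IntermediateField.smul_def]
          simp [smul_eq_mul, hx'def, mul_comm]
        rw [Finset.sum_congr rfl (fun i _ => this i), ← hxl, hrel]
        simp
      have := hli hsum (Fin.last n)
      rw [hg, Fin.lastCases_last] at this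
      exact one_ne_zero this
    obtain ⟨a₀, ha₀B, ha₀kill, ha₀ne⟩ := key
    obtain ⟨b', hb'B, hb'⟩ := IH x' hx' (fun j => y j.castSucc)
    set t : L := a₀ xl with ht
    refine ⟨b' + Algebra.lmul K L ((y (Fin.last n) - b' xl) * t⁻¹) * a₀,
      B.add_mem hb'B (B.mul_mem (hB (AlgHom.mem_range_self _ _)) ha₀B), ?_⟩
    intro j
    rcases Fin.eq_castSucc_or_eq_last j with ⟨i, rfl⟩ | rfl
    · simp only [LinearMap.add_apply, Module.End.mul_apply]
      have h1 : a₀ (x i.castSucc) = 0 := ha₀kill i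
      rw [h1]
      simpa [hx'def] using hb' i
    ·
      simp only [LinearMap.add_apply, Module.End.mul_apply, ← hxl, ← ht, jb_lmul_apply]
      rw [mul_assoc, inv_mul_cancel₀ ha₀ne]
      ring

end JB2


/-- For a finite field extension `L/K`, every `K`-subalgebra of `E = End_K(L)` containing the
image of `L` is `End_M(L)` for a unique intermediate field `M`, namely `M = C_E(B)`; moreover
`C_E(M) = End_M(L)` for every intermediate field `M`. -/
theorem stmt4 (K L : Type) [Field K] [Field L] [Algebra K L] [FiniteDimensional K L] :
    (∀ M : IntermediateField K L,
        ((Subalgebra.centralizer K ((Algebra.lmul K L) '' (M : Set L)) :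
            Subalgebra K (Module.End K L)) : Set (Module.End K L)) =
          {f : Module.End K L | ∀ m ∈ M, ∀ x : L, f (m * x) = m * f x}) ∧
    (∀ B : Subalgebra K (Module.End K L), (Algebra.lmul K L).range ≤ B →
        ∃! M : IntermediateField K L,
          (B : Set (Module.End K L)) =
              {f : Module.End K L | ∀ m ∈ M, ∀ x : L, f (m * x) = m * f x} ∧
          (Algebra.lmul K L) '' (M : Set L) =
            (Subalgebra.centralizer K (B : Set (Module.End K L)) :
              Subalgebra K (Module.End K L))) := by
  constructor
  · intro M
    ext f
    simp only [SetLike.mem_coe, Subalgebra.mem_centralizer_iff, Set.mem_setOf_eq]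
    constructor
    · intro h m hm x
      have := LinearMap.ext_iff.mp (h _ ⟨m, hm, rfl⟩) x
      simpa [Module.End.mul_apply] using this.symm
    · rintro h g ⟨m, hm, rfl⟩
      ext x
      simpa [Module.End.mul_apply] using (h m hm x).symm
  · intro B hB
    set M := jbM K L B with hMdef
    have hglmul : ∀ g ∈ Subalgebra.centralizer K (B : Set (Module.End K L)),
        ∀ l x : L, g (l * x) = l * g x := by
      intro g hg l x
      have := (Subalgebra.mem_centralizer_iff K).mp hg _ (hB (AlgHom.mem_range_self _ l))
      have := LinearMap.ext_iff.mp this x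
      simpa [Module.End.mul_apply] using this.symm
    have condb : (Algebra.lmul K L) '' (M : Set L) =
        ((Subalgebra.centralizer K (B : Set (Module.End K L)) :
          Subalgebra K (Module.End K L)) : Set (Module.End K L)) := by
      apply Set.Subset.antisymm
      · rintro _ ⟨m, hm, rfl⟩
        exact hm
      · intro g hg
        have hg' : g ∈ Subalgebra.centralizer K (B : Set (Module.End K L)) := hg
        have hgl : Algebra.lmul K L (g 1) = g := by
          ext x
          rw [jb_lmul_apply, mul_comm]
          have := hglmul g hg' x 1
          rw [mul_one] at this
          exact this.symm
        refine ⟨g 1, ?_, hgl⟩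
        show Algebra.lmul K L (g 1) ∈ Subalgebra.centralizer K (B : Set (Module.End K L))
        rw [hgl]; exact hg'
    have conda : (B : Set (Module.End K L)) =
        {f : Module.End K L | ∀ m ∈ M, ∀ x : L, f (m * x) = m * f x} := by
      apply Set.Subset.antisymm
      · intro f hf m hm x
        exact (mem_jbM K L B).mp hm f hf x
      · intro f hf
        let bas := Module.finBasis M L
        obtain ⟨g, hgB, hg⟩ := jb_density hB _ bas bas.linearIndependent (fun i => f (bas i))
        have hfM : ∀ (c : M) (w : L), f (c • w) = c • f w := by
          intro c w
          rw [IntermediateField.smul_def, IntermediateField.smul_def, smul_eq_mul, smul_eq_mul]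
          exact hf c c.2 w
        have hgM : ∀ (c : M) (w : L), g (c • w) = c • g w := by
          intro c w
          rw [IntermediateField.smul_def, IntermediateField.smul_def, smul_eq_mul, smul_eq_mul]
          exact (mem_jbM K L B).mp c.2 g hgB w
        let f' : L →ₗ[M] L := ⟨⟨f, f.map_add⟩, hfM⟩
        let g' : L →ₗ[M] L := ⟨⟨g, g.map_add⟩, hgM⟩
        have hfg' : f' = g' := bas.ext (fun i => (hg i).symm)
        have hfg : f = g := LinearMap.ext fun x => DFunLike.congr_fun hfg' x
        rw [SetLike.mem_coe, hfg]
        exact hgB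
    refine ⟨M, ⟨conda, condb⟩, ?_⟩
    rintro M' ⟨h1, h2⟩
    have himg : (Algebra.lmul K L) '' (M' : Set L) = (Algebra.lmul K L) '' (M : Set L) :=
      h2.trans condb.symm
    have hs : (M' : Set L) = (M : Set L) :=
      Set.image_injective.mpr (Algebra.lmul_injective) himg
    exact SetLike.ext' hs
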